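/- If {f_1,...,f_n} is a uniform Parseval frame for ℂ^k (so ‖f_i‖^2 = k/n for all i), then there is a partition {R, T} of {1,...,n} such that Σ_{i∈R} Σ_{j∈T} |⟨f_i, f_j⟩|^2 ≥ (k/4)(1 - k/n). -/

import Mathlib

open scoped InnerProductSpace

open Finset in
private lemma toggle_card {n : ℕ} (j : Fin n) (P : Finset (Fin n) → Prop) [DecidablePred P]
    (hP : ∀ S, P (symmDiff S {j}) ↔ P S) :
    (univ.filter (fun S => P S ∧ j ∈ S)).card
      = (univ.filter (fun S => P S ∧ j ∉ S)).card := by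
  apply Finset.card_bij' (fun S _ => symmDiff S {j}) (fun S _ => symmDiff S {j})
  · intro S _; exact symmDiff_symmDiff_cancel_right {j} S
  · intro S _; exact symmDiff_symmDiff_cancel_right {j} S
  · intro S hS
    simp only [mem_filter, mem_univ, true_and] at hS ⊢
    exact ⟨(hP S).2 hS.1, by simp [Finset.mem_symmDiff, hS.2]⟩
  · intro S hS
    simp only [mem_filter, mem_univ, true_and] at hS ⊢
    exact ⟨(hP S).2 hS.1, by simp [Finset.mem_symmDiff, hS.2]⟩

open Finset in
private lemma card_cut {n : ℕ} {i j : Fin n} (hij : i ≠ j) :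
    4 * (Finset.univ.filter (fun S : Finset (Fin n) => i ∈ S ∧ j ∉ S)).card = 2 ^ n := by
  classical
  have hPi : ∀ S : Finset (Fin n), i ∈ symmDiff S {j} ↔ i ∈ S := by
    intro S; simp [Finset.mem_symmDiff, hij]
  have hPj : ∀ S : Finset (Fin n), (j ∉ symmDiff S {i}) ↔ j ∉ S := by
    intro S; simp [Finset.mem_symmDiff, hij.symm]
  have h1 := toggle_card j (fun S => i ∈ S) hPi
  have h2 := toggle_card j (fun S => i ∉ S) (fun S => not_congr (hPi S))
  have h3 := toggle_card i (fun S => j ∉ S) hPj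
  have e3l : (univ.filter (fun S : Finset (Fin n) => j ∉ S ∧ i ∈ S))
      = (univ.filter (fun S : Finset (Fin n) => i ∈ S ∧ j ∉ S)) := by
    ext S; simp only [mem_filter]; tauto
  have e3r : (univ.filter (fun S : Finset (Fin n) => j ∉ S ∧ i ∉ S))
      = (univ.filter (fun S : Finset (Fin n) => i ∉ S ∧ j ∉ S)) := by
    ext S; simp only [mem_filter]; tauto
  beta_reduce at h1 h2
  rw [e3l, e3r] at h3
  have A := Finset.card_filter_add_card_filter_not
    (s := (univ.filter (fun S : Finset (Fin n) => i ∈ S))) (p := fun S => j ∈ S)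
  have B := Finset.card_filter_add_card_filter_not
    (s := (univ.filter (fun S : Finset (Fin n) => i ∉ S))) (p := fun S => j ∈ S)
  have C := Finset.card_filter_add_card_filter_not
    (s := (univ : Finset (Finset (Fin n)))) (p := fun S => i ∈ S)
  rw [Finset.filter_filter, Finset.filter_filter] at A B
  have hcu : (univ : Finset (Finset (Fin n))).card = 2 ^ n := by
    rw [Finset.card_univ, Fintype.card_finset, Fintype.card_fin]
  rw [hcu] at C
  omega

theorem uniform_frame_cross_energy
    (n k : ℕ) (hn : 0 < n)
    (f : Fin n → EuclideanSpace ℂ (Fin k))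
    (hparseval : ∀ x : EuclideanSpace ℂ (Fin k), ∑ i, ⟪f i, x⟫_ℂ • f i = x)
    (huniform : ∀ i, ‖f i‖ ^ 2 = (k : ℝ) / n) :
    ∃ R T : Finset (Fin n), Disjoint R T ∧ R ∪ T = Finset.univ ∧
      ((k : ℝ) / 4) * (1 - (k : ℝ) / n) ≤
        ∑ i ∈ R, ∑ j ∈ T, ‖⟪f i, f j⟫_ℂ‖ ^ 2 := by
  classical
  set a : Fin n → Fin n → ℝ := fun i j => ‖⟪f i, f j⟫_ℂ‖ ^ 2 with ha
  have hsym : ∀ i j, a i j = a j i := by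
    intro i j
    simp only [ha]
    rw [← inner_conj_symm (f i) (f j), Complex.norm_conj]
  have hrow : ∀ t, ∑ i, a i t = (k : ℝ) / n := by
    intro t
    have h := congrArg (fun x => ⟪f t, x⟫_ℂ) (hparseval (f t))
    simp only [inner_sum, inner_smul_right] at h
    have h' : ∀ i, ⟪f i, f t⟫_ℂ * ⟪f t, f i⟫_ℂ = ((a i t : ℝ) : ℂ) := by
      intro i
      rw [← inner_conj_symm (f t) (f i), Complex.mul_conj]
      simp [ha, Complex.sq_norm]
    rw [Finset.sum_congr rfl (fun i _ => h' i),
      show ⟪f t, f t⟫_ℂ = ((‖f t‖ ^ 2 : ℝ) : ℂ) from by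
        rw [inner_self_eq_norm_sq_to_K]; norm_cast,
      ← Complex.ofReal_sum] at h
    have h2 : (∑ i, a i t) = ‖f t‖ ^ 2 := by exact_mod_cast h
    rw [h2, huniform t]
  have hrow' : ∀ i, ∑ j, a i j = (k : ℝ) / n := by
    intro i
    rw [Finset.sum_congr rfl (fun j _ => hsym i j)]
    exact hrow i
  have hdiag : ∀ i, a i i = ((k : ℝ) / n) ^ 2 := by
    intro i
    have h0 : ⟪f i, f i⟫_ℂ = ((‖f i‖ ^ 2 : ℝ) : ℂ) := by
      rw [inner_self_eq_norm_sq_to_K]; norm_cast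
    simp only [ha, h0, Complex.norm_real, Real.norm_eq_abs]
    rw [abs_of_nonneg (sq_nonneg ‖f i‖), huniform i]
  set g : Finset (Fin n) → ℝ := fun S => ∑ i ∈ S, ∑ j ∈ Sᶜ, a i j with hgdef
  -- rewrite g S as a full double sum with indicators
  have hg : ∀ S : Finset (Fin n),
      g S = ∑ i, ∑ j, if i ∈ S ∧ j ∉ S then a i j else 0 := by
    intro S
    have inner : ∀ i, (∑ j, if j ∉ S then a i j else 0) = ∑ j ∈ Sᶜ, a i j := by
      intro i
      simp only [← Finset.mem_compl]
      rw [Finset.sum_ite_mem, Finset.univ_inter]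
    calc g S = ∑ i ∈ S, ∑ j ∈ Sᶜ, a i j := rfl
      _ = ∑ i, (if i ∈ S then ∑ j ∈ Sᶜ, a i j else 0) := by
          rw [Finset.sum_ite_mem, Finset.univ_inter]
      _ = ∑ i, ∑ j, if i ∈ S ∧ j ∉ S then a i j else 0 := by
          refine Finset.sum_congr rfl fun i _ => ?_
          by_cases hi : i ∈ S
          · simp only [hi, if_true, true_and, ← inner i]
          · simp [hi]
  -- total over all subsets
  have key : ∀ i j : Fin n,
      (∑ S : Finset (Fin n), if i ∈ S ∧ j ∉ S then a i j else 0)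
        = if i = j then 0 else ((2 : ℝ) ^ n / 4) * a i j := by
    intro i j
    by_cases hij : i = j
    · subst hij
      simp only [if_pos rfl]
      exact Finset.sum_eq_zero fun S _ => by simp [em (i ∈ S)]
    · rw [if_neg hij, ← Finset.sum_filter, Finset.sum_const, nsmul_eq_mul]
      have hc : (4 : ℝ) * ((Finset.univ.filter
          (fun S : Finset (Fin n) => i ∈ S ∧ j ∉ S)).card : ℝ) = 2 ^ n := by
        exact_mod_cast card_cut hij
      have : ((Finset.univ.filter
          (fun S : Finset (Fin n) => i ∈ S ∧ j ∉ S)).card : ℝ) = (2 : ℝ) ^ n / 4 := by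
        linarith
      rw [this]
  have htot : ∑ S : Finset (Fin n), g S
      = ((2 : ℝ) ^ n / 4) * ((n : ℝ) * ((k : ℝ) / n - ((k : ℝ) / n) ^ 2)) := by
    calc ∑ S : Finset (Fin n), g S
        = ∑ S : Finset (Fin n), ∑ i, ∑ j, (if i ∈ S ∧ j ∉ S then a i j else 0) :=
          Finset.sum_congr rfl fun S _ => hg S
      _ = ∑ i, ∑ j, ∑ S : Finset (Fin n), (if i ∈ S ∧ j ∉ S then a i j else 0) := by
          rw [Finset.sum_comm]
          exact Finset.sum_congr rfl fun i _ => Finset.sum_comm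
      _ = ∑ i, ∑ j, (if i = j then 0 else ((2 : ℝ) ^ n / 4) * a i j) := by
          exact Finset.sum_congr rfl fun i _ => Finset.sum_congr rfl fun j _ => key i j
      _ = ∑ i : Fin n, ((2 : ℝ) ^ n / 4) * ((k : ℝ) / n - ((k : ℝ) / n) ^ 2) := by
          refine Finset.sum_congr rfl fun i _ => ?_
          have split : ∀ j, (if i = j then 0 else ((2 : ℝ) ^ n / 4) * a i j)
              = ((2 : ℝ) ^ n / 4) * a i j - (if i = j then ((2 : ℝ) ^ n / 4) * a i j else 0) := by
            intro j; by_cases h : i = j <;> simp [h]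
          rw [Finset.sum_congr rfl fun j _ => split j, Finset.sum_sub_distrib,
            Finset.sum_ite_eq, if_pos (Finset.mem_univ i), ← Finset.mul_sum, hrow' i,
            hdiag i]
          ring
      _ = ((2 : ℝ) ^ n / 4) * ((n : ℝ) * ((k : ℝ) / n - ((k : ℝ) / n) ^ 2)) := by
          rw [Finset.sum_const, Finset.card_univ, Fintype.card_fin, nsmul_eq_mul]
          ring
  have hne : (Finset.univ : Finset (Finset (Fin n))).Nonempty := ⟨∅, Finset.mem_univ _⟩
  have hnR : (n : ℝ) ≠ 0 := Nat.cast_ne_zero.mpr hn.ne'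
  have havg : ∑ _S : Finset (Fin n), ((k : ℝ) / 4) * (1 - (k : ℝ) / n)
      ≤ ∑ S : Finset (Fin n), g S := by
    rw [htot, Finset.sum_const, Finset.card_univ, Fintype.card_finset, Fintype.card_fin,
      nsmul_eq_mul]
    apply le_of_eq
    push_cast
    field_simp
  obtain ⟨S, -, hS⟩ := Finset.exists_le_of_sum_le hne havg
  exact ⟨S, Sᶜ, disjoint_compl_right, Finset.union_compl S, hS⟩
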